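/- For the PRPO objective with parameters 0 < ε₋ ≤ 1 ≤ ε₊, the gap between the objective value at any ranking y and at the logging ranking y₀ is bounded: Σ_d f(ω(d|y)/ω₀(d), ε₋, ε₊, r(d)) − Σ_d r(d) ≤ (ε₊ − 1)·Σ_{d: r(d)>0} r(d) + (1 − ε₋)·Σ_{d: r(d)<0} (−r(d)). -/
import Mathlib


open Finset

/-- The PRPO clipping function (Eq. 20). -/
noncomputable def prpoClip (x epsMinus epsPlus r : ℝ) : ℝ :=
  if 0 ≤ r then min x epsPlus * r else max x epsMinus * r

/-- The gap between the PRPO objective at any ranking (weight ratios `ratio d ≥ 0`)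
and at the logging ranking (where the objective equals `Σ_d r(d)`) is bounded by
`(ε₊ − 1)·Σ_{r(d)>0} r(d) + (1 − ε₋)·Σ_{r(d)<0} (−r(d))`. -/
theorem prpo_gap_bounded {D : Type*} [Fintype D]
    (epsMinus epsPlus : ℝ) (h0 : 0 < epsMinus) (h1 : epsMinus ≤ 1)
    (h2 : 1 ≤ epsPlus) (ratio r : D → ℝ) (hratio : ∀ d, 0 ≤ ratio d) :
    (∑ d, prpoClip (ratio d) epsMinus epsPlus (r d)) - ∑ d, r d
      ≤ (epsPlus - 1) * ∑ d ∈ Finset.univ.filter (fun d => 0 < r d), r d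
        + (1 - epsMinus) * ∑ d ∈ Finset.univ.filter (fun d => r d < 0), (- r d) := by
  have key : ∀ d : D, prpoClip (ratio d) epsMinus epsPlus (r d) - r d
      ≤ (epsPlus - 1) * (if 0 < r d then r d else 0)
        + (1 - epsMinus) * (if r d < 0 then -r d else 0) := by
    intro d
    unfold prpoClip
    rcases lt_trichotomy (r d) 0 with h | h | h
    · simp only [not_le.mpr h, if_neg, h, if_pos, not_lt.mpr h.le, if_false]
      have : max (ratio d) epsMinus * r d ≤ epsMinus * r d :=
        mul_le_mul_of_nonpos_right (le_max_right _ _) h.le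
      nlinarith
    · simp [h]
    · simp only [h.le, if_pos, h, not_lt.mpr h.le, if_false]
      have : min (ratio d) epsPlus * r d ≤ epsPlus * r d :=
        mul_le_mul_of_nonneg_right (min_le_right _ _) h.le
      nlinarith
  calc (∑ d, prpoClip (ratio d) epsMinus epsPlus (r d)) - ∑ d, r d
      = ∑ d, (prpoClip (ratio d) epsMinus epsPlus (r d) - r d) := by
        rw [Finset.sum_sub_distrib]
    _ ≤ ∑ d, ((epsPlus - 1) * (if 0 < r d then r d else 0)
          + (1 - epsMinus) * (if r d < 0 then -r d else 0)) :=
        Finset.sum_le_sum fun d _ => key d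
    _ = (epsPlus - 1) * ∑ d ∈ Finset.univ.filter (fun d => 0 < r d), r d
        + (1 - epsMinus) * ∑ d ∈ Finset.univ.filter (fun d => r d < 0), (- r d) := by
        rw [Finset.sum_add_distrib, ← Finset.mul_sum, ← Finset.mul_sum,
          Finset.sum_filter, Finset.sum_filter]
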